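/- (Theorem 6: initial bang for the open system.) Let B, C be Hermitian d_S×d_S matrices, H_E Hermitian d_E×d_E, H_I Hermitian on ℂ^{d_S}⊗ℂ^{d_E}, H_tot(v) := (C + v(B−C))⊗I_E + H_I + I_S⊗H_E, and t_f > 0. Let ρ, p : [0,t_f] → (Hermitian matrices on ℂ^{d_S}⊗ℂ^{d_E}) be continuous, let s : [0,t_f] → [0,1], and suppose: (a) ρ(0) = ρ₀ ⊗ ρ_E with ρ₀, ρ_E Hermitian, [ρ_E, H_E] = 0, [H_I, ρ₀⊗ρ_E] = 0, and [B, ρ₀] = 0; (b) there is a real constant λ > 0 with Re Tr(p(t)·(−i)[H_tot(s(t)), ρ(t)]) = λ for every t ∈ [0,t_f]; and (c) for every t ∈ [0,t_f] and every v ∈ [0,1], Re Tr(p(t)·(−i)[H_tot(v), ρ(t)]) ≤ λ. Then there exists ε > 0 such that s(t) = 0 for all t ∈ [0, ε). -/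

import Mathlib

open Matrix
open scoped Kronecker

noncomputable section

namespace Stmt13

variable {dS dE : ℕ}

/-- The superoperator `K_X(ρ) = −i[X, ρ]` on the joint system–environment space. -/
def K (X ρ : Matrix (Fin dS × Fin dE) (Fin dS × Fin dE) ℂ) :
    Matrix (Fin dS × Fin dE) (Fin dS × Fin dE) ℂ :=
  (-Complex.I) • (X * ρ - ρ * X)

/-- The total Hamiltonian `H_tot(v) = (C + v(B−C))⊗I_E + H_I + I_S⊗H_E`. -/
def Htot (B C : Matrix (Fin dS) (Fin dS) ℂ) (HE : Matrix (Fin dE) (Fin dE) ℂ)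
    (HI : Matrix (Fin dS × Fin dE) (Fin dS × Fin dE) ℂ) (v : ℝ) :
    Matrix (Fin dS × Fin dE) (Fin dS × Fin dE) ℂ :=
  (C + (v : ℂ) • (B - C)) ⊗ₖ (1 : Matrix (Fin dE) (Fin dE) ℂ) + HI +
    (1 : Matrix (Fin dS) (Fin dS) ℂ) ⊗ₖ HE

lemma K_add_smul (H0 D ρ : Matrix (Fin dS × Fin dE) (Fin dS × Fin dE) ℂ) (c : ℂ) :
    K (H0 + c • D) ρ = K H0 ρ + c • K D ρ := by
  simp only [K, add_mul, mul_add, smul_mul_assoc, mul_smul_comm]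
  module

lemma Htot_eq (B C : Matrix (Fin dS) (Fin dS) ℂ) (HE : Matrix (Fin dE) (Fin dE) ℂ)
    (HI : Matrix (Fin dS × Fin dE) (Fin dS × Fin dE) ℂ) (v : ℝ) :
    Htot B C HE HI v = Htot B C HE HI 0 +
      (v : ℂ) • ((B - C) ⊗ₖ (1 : Matrix (Fin dE) (Fin dE) ℂ)) := by
  simp only [Htot, Complex.ofReal_zero, zero_smul, add_zero]
  rw [Matrix.add_kronecker, Matrix.smul_kronecker]
  abel

/-- affine dependence of the PMP Hamiltonian on the control -/
lemma F_affine (B C : Matrix (Fin dS) (Fin dS) ℂ) (HE : Matrix (Fin dE) (Fin dE) ℂ)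
    (HI P R : Matrix (Fin dS × Fin dE) (Fin dS × Fin dE) ℂ) (v : ℝ) :
    (Matrix.trace (P * K (Htot B C HE HI v) R)).re =
      (1 - v) * (Matrix.trace (P * K (Htot B C HE HI 0) R)).re +
        v * (Matrix.trace (P * K (Htot B C HE HI 1) R)).re := by
  have key : ∀ w : ℝ, (Matrix.trace (P * K (Htot B C HE HI w) R)).re =
      (Matrix.trace (P * K (Htot B C HE HI 0) R)).re +
        w * (Matrix.trace (P * K ((B - C) ⊗ₖ (1 : Matrix (Fin dE) (Fin dE) ℂ)) R)).re := by
    intro w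
    rw [Htot_eq, K_add_smul, mul_add, Matrix.trace_add, mul_smul_comm, Matrix.trace_smul]
    simp [Complex.add_re, Complex.mul_re]
  rw [key v, key 1]
  ring

/-- **Theorem 6** (initial bang for the open system): if the initial state is factorized,
`[ρ_E, H_E] = 0`, `[H_I, ρ₀⊗ρ_E] = 0` and `[B, ρ₀] = 0`, and the PMP conditions hold with an
active final-time constraint (`λ > 0`), then `s ≡ 0` on an initial interval `[0, ε)`. -/
theorem open_system_initial_bang
    (B C : Matrix (Fin dS) (Fin dS) ℂ) (hB : B.IsHermitian) (hC : C.IsHermitian)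
    (HE : Matrix (Fin dE) (Fin dE) ℂ) (hHE : HE.IsHermitian)
    (HI : Matrix (Fin dS × Fin dE) (Fin dS × Fin dE) ℂ) (hHI : HI.IsHermitian)
    (tf : ℝ) (htf : 0 < tf)
    (ρ p : ℝ → Matrix (Fin dS × Fin dE) (Fin dS × Fin dE) ℂ) (s : ℝ → ℝ)
    (hρcont : ContinuousOn ρ (Set.Icc 0 tf)) (hpcont : ContinuousOn p (Set.Icc 0 tf))
    (hρHerm : ∀ t ∈ Set.Icc (0 : ℝ) tf, (ρ t).IsHermitian)
    (hpHerm : ∀ t ∈ Set.Icc (0 : ℝ) tf, (p t).IsHermitian)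
    (hsval : ∀ t ∈ Set.Icc (0 : ℝ) tf, s t ∈ Set.Icc (0 : ℝ) 1)
    -- (a) factorized initial state, stationary environment, interaction-invariant initial
    -- state, and initial state commuting with the driver
    (ρ0 : Matrix (Fin dS) (Fin dS) ℂ) (hρ0 : ρ0.IsHermitian)
    (ρE : Matrix (Fin dE) (Fin dE) ℂ) (hρE : ρE.IsHermitian)
    (hinit : ρ 0 = ρ0 ⊗ₖ ρE)
    (hρEHE : ρE * HE = HE * ρE)
    (hHIinit : HI * (ρ0 ⊗ₖ ρE) = (ρ0 ⊗ₖ ρE) * HI)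
    (hBρ0 : B * ρ0 = ρ0 * B)
    -- (b) the PMP control Hamiltonian is constant and equal to `λ > 0`
    (lam : ℝ) (hlam : 0 < lam)
    (hconst : ∀ t ∈ Set.Icc (0 : ℝ) tf,
      (Matrix.trace (p t * K (Htot B C HE HI (s t)) (ρ t))).re = lam)
    -- (c) the maximum condition
    (hmax : ∀ t ∈ Set.Icc (0 : ℝ) tf, ∀ v ∈ Set.Icc (0 : ℝ) 1,
      (Matrix.trace (p t * K (Htot B C HE HI v) (ρ t))).re ≤ lam) :
    ∃ ε > 0, ∀ t ∈ Set.Ico (0 : ℝ) ε, s t = 0 := by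
  -- H_tot(1) commutes with the initial state
  have hH1 : Htot B C HE HI 1 = B ⊗ₖ (1 : Matrix (Fin dE) (Fin dE) ℂ) + HI +
      (1 : Matrix (Fin dS) (Fin dS) ℂ) ⊗ₖ HE := by
    simp [Htot]
  have hcomm : Htot B C HE HI 1 * (ρ0 ⊗ₖ ρE) = (ρ0 ⊗ₖ ρE) * Htot B C HE HI 1 := by
    rw [hH1]
    simp only [add_mul, mul_add, ← Matrix.mul_kronecker_mul, hHIinit, one_mul, mul_one]
    rw [hBρ0, hρEHE]
  -- the value at `v = 1` vanishes at `t = 0`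
  have hF01 : (Matrix.trace (p 0 * K (Htot B C HE HI 1) (ρ 0))).re = 0 := by
    rw [hinit]
    have : K (Htot B C HE HI 1) (ρ0 ⊗ₖ ρE) = 0 := by
      simp [K, hcomm]
    rw [this]
    simp
  -- continuity of the value at `v = 1`
  have hFcont : ContinuousOn
      (fun t => (Matrix.trace (p t * K (Htot B C HE HI 1) (ρ t))).re)
      (Set.Icc 0 tf) := by
    have hG : Continuous (fun q : (Matrix (Fin dS × Fin dE) (Fin dS × Fin dE) ℂ) ×
        (Matrix (Fin dS × Fin dE) (Fin dS × Fin dE) ℂ) =>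
        (Matrix.trace (q.1 * K (Htot B C HE HI 1) q.2)).re) := by
      apply Complex.continuous_re.comp
      apply Continuous.matrix_trace
      apply Continuous.matrix_mul continuous_fst
      unfold K
      exact Continuous.const_smul (((continuous_const (y := Htot B C HE HI 1)).matrix_mul (continuous_snd : Continuous (Prod.snd : Matrix (Fin dS × Fin dE) (Fin dS × Fin dE) ℂ × Matrix (Fin dS × Fin dE) (Fin dS × Fin dE) ℂ → Matrix (Fin dS × Fin dE) (Fin dS × Fin dE) ℂ))).sub
        (continuous_snd.matrix_mul (continuous_const (y := Htot B C HE HI 1)))) (-Complex.I)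
    exact hG.comp_continuousOn (hpcont.prodMk hρcont |>.mono (fun x hx => hx) |> fun h => h) |>.congr (fun t ht => rfl)
  have h0mem : (0 : ℝ) ∈ Set.Icc (0 : ℝ) tf := ⟨le_refl _, le_of_lt htf⟩
  -- find a neighborhood where the value at `v = 1` stays below `lam`
  have hev : ∀ᶠ t in nhdsWithin 0 (Set.Icc (0 : ℝ) tf),
      (Matrix.trace (p t * K (Htot B C HE HI 1) (ρ t))).re < lam := by
    have := hFcont 0 h0mem
    have hlt : (Matrix.trace (p 0 * K (Htot B C HE HI 1) (ρ 0))).re < lam := by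
      rw [hF01]; exact hlam
    exact this.eventually_lt continuousWithinAt_const hlt
  rw [eventually_nhdsWithin_iff] at hev
  rw [Metric.eventually_nhds_iff] at hev
  obtain ⟨δ, hδpos, hδ⟩ := hev
  refine ⟨min δ tf, lt_min hδpos htf, ?_⟩
  intro t ht
  obtain ⟨ht0, htlt⟩ := ht
  have htmem : t ∈ Set.Icc (0 : ℝ) tf :=
    ⟨ht0, le_of_lt (lt_of_lt_of_le htlt (min_le_right _ _))⟩
  have hdist : dist t 0 < δ := by
    rw [Real.dist_eq, sub_zero, abs_of_nonneg ht0]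
    exact lt_of_lt_of_le htlt (min_le_left _ _)
  have hb1 : (Matrix.trace (p t * K (Htot B C HE HI 1) (ρ t))).re < lam :=
    hδ hdist htmem
  have ha : (Matrix.trace (p t * K (Htot B C HE HI 0) (ρ t))).re ≤ lam :=
    hmax t htmem 0 ⟨le_refl _, zero_le_one⟩
  have hc : (Matrix.trace (p t * K (Htot B C HE HI (s t)) (ρ t))).re = lam :=
    hconst t htmem
  rw [F_affine] at hc
  obtain ⟨hs0, hs1⟩ := hsval t htmem
  by_contra hne
  have hspos : 0 < s t := lt_of_le_of_ne hs0 (Ne.symm hne)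
  nlinarith [hc, ha, hb1, hspos, hs1]

end Stmt13
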